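/- For r > 1, θ ∈ ℝ, δ > 0, the function α(t) := t^{θ + δ sin((ln ln t)^r)} for t > e (and α(t) := t^θ for 1 ≤ t ≤ e) does NOT belong to the class RO. -/

import Mathlib

open Real Filter

/-- The class RO of RO-varying functions at infinity. -/
def IsRO (α : ℝ → ℝ) : Prop :=
  Measurable (fun t : Set.Ici (1 : ℝ) => α t.1) ∧
  (∀ t : ℝ, 1 ≤ t → 0 < α t) ∧
  ∃ b : ℝ, 1 < b ∧ ∃ c : ℝ, 1 ≤ c ∧ ∀ t : ℝ, 1 ≤ t → ∀ l : ℝ, 1 ≤ l → l ≤ b →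
    c⁻¹ ≤ α (l * t) / α t ∧ α (l * t) / α t ≤ c

/-- The function `α t = t^{θ + δ sin((ln ln t)^r)}` for `t > e`, and `α t = t^θ` for
`1 ≤ t ≤ e`. -/
noncomputable def alphaSinPow (θ δ r : ℝ) (t : ℝ) : ℝ :=
  if Real.exp 1 < t then t ^ (θ + δ * Real.sin (Real.log (Real.log t) ^ r)) else t ^ θ

set_option maxHeartbeats 1000000 in
/-- For `r > 1`, the function `t^{θ + δ sin((ln ln t)^r)}` does not belong to RO. -/
theorem stmt9 (θ δ r : ℝ) (hδ : 0 < δ) (hr : 1 < r) :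
    ¬ IsRO (alphaSinPow θ δ r) := by
  rintro ⟨-, hpos, b, hb, c, hc, hbound⟩
  have hπ := Real.pi_pos
  have hr0 : (0:ℝ) < r := by linarith
  have hlb : 0 < Real.log b := Real.log_pos hb
  have hb0 : (0:ℝ) < b := by linarith
  set M : ℕ → ℝ := fun k => (2 * π * k) ^ (1/r : ℝ) with hMdef
  have hMtop : Tendsto M atTop atTop := by
    apply (tendsto_rpow_atTop (by positivity : (0:ℝ) < 1/r)).comp
    exact Tendsto.const_mul_atTop (by positivity : (0:ℝ) < 2*π) tendsto_natCast_atTop_atTop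
  have hg0 : Tendsto (fun x : ℝ => x ^ (r-1) / Real.exp x) atTop (nhds 0) := by
    have := tendsto_rpow_mul_exp_neg_mul_atTop_nhds_zero (r-1) 1 one_pos
    simpa [Real.exp_neg, div_eq_mul_inv] using this
  have hgM : Tendsto (fun k => r * Real.log b * ((M k + 1) ^ (r-1) / Real.exp (M k)))
      atTop (nhds 0) := by
    have h1 : Tendsto (fun k => (M k + 1) ^ (r-1) / Real.exp (M k + 1)) atTop (nhds 0) :=
      hg0.comp (tendsto_atTop_add_const_right _ 1 hMtop)
    have h2 : Tendsto (fun k => Real.exp 1 * ((M k + 1) ^ (r-1) / Real.exp (M k + 1)))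
        atTop (nhds 0) := by simpa using h1.const_mul (Real.exp 1)
    refine Tendsto.congr (fun k => ?_) (by simpa using h2.const_mul (r * Real.log b))
    rw [Real.exp_add]
    have := (Real.exp_pos (M k)).ne'
    field_simp
  have hmain : Tendsto (fun k => θ * Real.log b + δ * r * Real.log b / π * (M k) ^ (r-1))
      atTop atTop := by
    apply tendsto_atTop_add_const_left
    exact Tendsto.const_mul_atTop (by positivity)
      ((tendsto_rpow_atTop (by linarith : (0:ℝ) < r - 1)).comp hMtop)
  -- pick a good k
  have hEv : ∀ᶠ k : ℕ in atTop, 1 ≤ M k ∧ Real.log b ≤ Real.exp (M k) ∧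
      r * Real.log b * ((M k + 1) ^ (r-1) / Real.exp (M k)) ≤ π/2 ∧
      Real.log c < θ * Real.log b + δ * r * Real.log b / π * (M k) ^ (r-1) := by
    refine (hMtop.eventually_ge_atTop 1).and
      (((Real.tendsto_exp_atTop.comp hMtop).eventually_ge_atTop (Real.log b)).and
      ((hgM.eventually_le_const (by positivity : (0:ℝ) < π/2)).and
        (hmain.eventually_gt_atTop (Real.log c)))) |>.mono ?_
    tauto
  obtain ⟨k, hM1, hLb, hgk, hbig⟩ := hEv.exists
  -- fixed quantities
  set Mk : ℝ := M k with hMk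
  set L : ℝ := Real.exp Mk with hL
  set T : ℝ := Real.exp L with hT
  have hMpos : 0 < Mk := by linarith
  have hLpos : 0 < L := Real.exp_pos _
  have hL1 : 1 < L := by
    rw [hL]; calc (1:ℝ) < Real.exp 1 := by simpa using Real.one_lt_exp_iff_of_pos one_pos |>.2 one_pos
    _ ≤ Real.exp Mk := Real.exp_le_exp.2 hM1
  have hTpos : 0 < T := Real.exp_pos _
  have hTgt : Real.exp 1 < T := Real.exp_lt_exp.2 hL1
  have hT1 : (1:ℝ) ≤ T := by
    rw [hT]; exact Real.one_le_exp hLpos.le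
  have hbT : Real.exp 1 < b * T := lt_trans hTgt (by nlinarith)
  have hlogT : Real.log T = L := Real.log_exp _
  have hloglogT : Real.log (Real.log T) = Mk := by rw [hlogT, hL, Real.log_exp]
  have hlogbT : Real.log (b * T) = Real.log b + L := by
    rw [Real.log_mul hb0.ne' hTpos.ne', hlogT]
  set N : ℝ := Real.log (Real.log b + L) with hN
  have hNM : Mk < N := by
    rw [hN, ← Real.log_exp Mk, ← hL]
    exact Real.log_lt_log hLpos (by linarith)
  have hNpos : 0 < N := lt_trans hMpos hNM
  set h : ℝ := N - Mk with hh
  have hh0 : 0 < h := by simp [hh]; linarith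
  -- h = log((log b + L)/L)
  have hform : h = Real.log ((Real.log b + L)/L) := by
    rw [hh, hN, Real.log_div (by positivity) hLpos.ne', hL, Real.log_exp]
  have h_le : h ≤ Real.log b / L := by
    rw [hform]
    have := Real.log_le_sub_one_of_pos (show (0:ℝ) < (Real.log b + L)/L by positivity)
    have heq : (Real.log b + L)/L - 1 = Real.log b / L := by field_simp; ring
    linarith
  have h_ge : Real.log b / (2*L) ≤ h := by
    have hneg : -h = Real.log (L / (Real.log b + L)) := by
      rw [hform, ← Real.log_inv, inv_div]
    have := Real.log_le_sub_one_of_pos (show (0:ℝ) < L/(Real.log b + L) by positivity)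
    have heq : L/(Real.log b + L) - 1 = -(Real.log b / (Real.log b + L)) := by field_simp; ring
    have h1 : Real.log b / (Real.log b + L) ≤ h := by
      rw [← neg_le_neg_iff]; rw [hneg] at *; linarith
    have h2 : Real.log b / (2*L) ≤ Real.log b / (Real.log b + L) := by
      apply div_le_div_of_nonneg_left hlb.le (by positivity) (by linarith)
    linarith
  have h_le1 : h ≤ 1 := by
    have : Real.log b / L ≤ 1 := by
      rw [div_le_one hLpos]; linarith
    linarith
  -- Mk ^ r = 2πk
  have hMr : Mk ^ r = 2 * π * k := by
    rw [hMk, hMdef]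
    show ((2*π*(k:ℝ)) ^ (1/r:ℝ)) ^ r = 2*π*(k:ℝ)
    rw [← Real.rpow_mul (by positivity), one_div, inv_mul_cancel₀ hr0.ne', Real.rpow_one]
  have hNeq : N = Mk + h := by rw [hh]; ring
  -- lower bound on d
  set d : ℝ := N ^ r - 2 * π * k with hd
  have hd_low : r * h * Mk ^ (r-1) ≤ d := by
    have hB := one_add_mul_self_le_rpow_one_add
      (show (-1:ℝ) ≤ h/Mk from le_trans (by norm_num : (-1:ℝ) ≤ 0) (by positivity)) hr.le
    have hmul : Mk ^ r * (1 + r * (h/Mk)) ≤ Mk ^ r * (1 + h/Mk) ^ r :=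
      mul_le_mul_of_nonneg_left hB (Real.rpow_nonneg hMpos.le r)
    have heq1 : Mk ^ r * (1 + h/Mk) ^ r = N ^ r := by
      rw [← Real.mul_rpow hMpos.le (by positivity), hNeq]
      congr 1
      field_simp
    have heq2 : Mk ^ r * (1 + r * (h/Mk)) = Mk ^ r + r * h * Mk ^ (r-1) := by
      rw [Real.rpow_sub hMpos, Real.rpow_one]
      field_simp
    rw [hd, ← hMr]
    linarith [heq1 ▸ heq2 ▸ hmul]
  -- upper bound on d
  have hd_up : d ≤ r * Real.log b * ((Mk + 1) ^ (r-1) / L) := by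
    have hhN : h / N ≤ 1 := by
      rw [div_le_one hNpos]; linarith
    have hB := one_add_mul_self_le_rpow_one_add
      (show (-1:ℝ) ≤ -(h/N) by linarith) hr.le
    have hmul : N ^ r * (1 + r * (-(h/N))) ≤ N ^ r * (1 + -(h/N)) ^ r :=
      mul_le_mul_of_nonneg_left hB (Real.rpow_nonneg hNpos.le r)
    have heq1 : N ^ r * (1 + -(h/N)) ^ r = Mk ^ r := by
      rw [← Real.mul_rpow hNpos.le (by linarith [hhN] : (0:ℝ) ≤ 1 + -(h/N))]
      congr 1
      field_simp
      linarith [hNeq]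
    have heq2 : N ^ r * (1 + r * (-(h/N))) = N ^ r - r * h * N ^ (r-1) := by
      rw [Real.rpow_sub hNpos, Real.rpow_one]
      field_simp
      ring
    have step1 : d ≤ r * h * N ^ (r-1) := by
      rw [hd, ← hMr]
      linarith [heq1 ▸ heq2 ▸ hmul]
    have hNle : N ≤ Mk + 1 := by rw [hNeq]; linarith
    have step2 : N ^ (r-1) ≤ (Mk + 1) ^ (r-1) :=
      Real.rpow_le_rpow hNpos.le hNle (by linarith)
    calc d ≤ r * h * N ^ (r-1) := step1
    _ ≤ r * (Real.log b / L) * (Mk+1) ^ (r-1) := by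
        apply mul_le_mul (mul_le_mul_of_nonneg_left h_le hr0.le) step2
          (Real.rpow_nonneg hNpos.le _) (by positivity)
    _ = r * Real.log b * ((Mk + 1) ^ (r-1) / L) := by ring
  have hd0 : 0 ≤ d := by
    have : 0 < r * h * Mk ^ (r-1) := by positivity
    linarith
  have hdpi : d ≤ π / 2 := le_trans hd_up hgk
  -- sin values
  have hsin1 : Real.sin (Real.log (Real.log T) ^ r) = 0 := by
    rw [hloglogT, hMr, show 2*π*(k:ℝ) = 0 + (k:ℝ)*(2*π) by ring,
      Real.sin_add_nat_mul_two_pi, Real.sin_zero]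
  have hsin2 : Real.sin (Real.log (Real.log (b * T)) ^ r) = Real.sin d := by
    rw [hlogbT, ← hN, show N ^ r = d + (k:ℝ)*(2*π) by rw [hd]; ring,
      Real.sin_add_nat_mul_two_pi]
  have hsind : 2/π * d ≤ Real.sin d := Real.mul_le_sin hd0 hdpi
  have hsind0 : 0 ≤ Real.sin d := le_trans (by positivity) hsind
  -- unfold alpha values
  have hαT : alphaSinPow θ δ r T = T ^ θ := by
    rw [alphaSinPow, if_pos hTgt, hsin1]
    norm_num
  have hαbT : alphaSinPow θ δ r (b * T) = (b*T) ^ (θ + δ * Real.sin d) := by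
    rw [alphaSinPow, if_pos hbT, hsin2]
  -- the RO bound
  have hub := (hbound T hT1 b hb.le le_rfl).2
  rw [hαT, hαbT] at hub
  have hαTpos : (0:ℝ) < T ^ θ := Real.rpow_pos_of_pos hTpos θ
  have hbTpos : (0:ℝ) < b * T := by positivity
  have hub2 : (b*T) ^ (θ + δ * Real.sin d) ≤ c * T ^ θ := by
    rw [div_le_iff₀ hαTpos] at hub
    linarith [hub]
  have hc0 : (0:ℝ) < c := by linarith
  have hlog := Real.log_le_log (Real.rpow_pos_of_pos hbTpos _) hub2
  rw [Real.log_rpow hbTpos, Real.log_mul hc0.ne' hαTpos.ne', Real.log_rpow hTpos,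
    hlogbT, hlogT] at hlog
  -- hlog : (θ + δ * sin d) * (log b + L) ≤ log c + θ * L
  have key1 : δ * r * Real.log b / π * Mk ^ (r-1) ≤ δ * Real.sin d * L := by
    have e1 : r * (Real.log b / (2*L)) * Mk ^ (r-1) ≤ d := by
      refine le_trans ?_ hd_low
      apply mul_le_mul_of_nonneg_right (mul_le_mul_of_nonneg_left h_ge hr0.le)
        (Real.rpow_nonneg hMpos.le _)
    have e2 : 2/π * d * L ≤ Real.sin d * L :=
      mul_le_mul_of_nonneg_right hsind hLpos.le
    have e3 : δ * (2/π * (r * (Real.log b / (2*L)) * Mk ^ (r-1)) * L) ≤ δ * (Real.sin d * L) := by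
      apply mul_le_mul_of_nonneg_left _ hδ.le
      refine le_trans ?_ e2
      apply mul_le_mul_of_nonneg_right (mul_le_mul_of_nonneg_left e1 (by positivity)) hLpos.le
    have e4 : δ * (2/π * (r * (Real.log b / (2*L)) * Mk ^ (r-1)) * L)
        = δ * r * Real.log b / π * Mk ^ (r-1) := by
      field_simp
    linarith [e4 ▸ e3]
  have key2 : 0 ≤ δ * Real.sin d * Real.log b := by positivity
  have expand : (θ + δ * Real.sin d) * (Real.log b + L)
      = θ * Real.log b + θ * L + δ * Real.sin d * Real.log b + δ * Real.sin d * L := by ring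
  rw [expand] at hlog
  linarith [hlog, key1, key2, hbig]
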